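/- If w ∈ S_n contains a 1432 pattern, then there exists a column-strict balanced labeling of D(w) with labels L(i,j) ≤ i for all squares that is not weakly decreasing along rows or not strictly increasing down columns (i.e., not a flagged Rothe tableau). Consequently the set of single-valued Rothe tableaux of shape D(w) flagged by (1,...,n) is a proper subset of the set of column-strict balanced labelings of D(w) flagged by (1,...,n). -/

import Mathlib

open Finset

lemma sorted_getD_eq (l : List ℕ) (hl : l.Pairwise (· ≤ ·)) (k c : ℕ)
    (h1 : (l.filter (· < c)).length ≤ k) (h2 : k < (l.filter (· ≤ c)).length) :
    l.getD k 0 = c := by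
  have hk : k < l.length := lt_of_lt_of_le h2 (by simpa using l.length_filter_le _)
  rw [List.getD_eq_getElem l 0 hk]
  have hpw := List.pairwise_iff_getElem.1 hl
  by_contra hne
  rcases Nat.lt_or_ge l[k] c with hlt | hge
  · -- l[k] < c : take (k+1) all < c, so filter (<c) has length ≥ k+1
    have htake : l.take (k+1) = (l.take (k+1)).filter (· < c) := by
      symm
      rw [List.filter_eq_self]
      intro a ha
      have hlen : (l.take (k+1)).length = k+1 := by
        rw [List.length_take]; omega
      rcases List.mem_iff_getElem.1 ha with ⟨m, hm, rfl⟩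
      have hm' : m < k + 1 := by omega
      have hml : m < l.length := by omega
      have he : (l.take (k+1))[m] = l[m]'hml := List.getElem_take
      rw [he]
      simp only [decide_eq_true_eq]
      rcases Nat.lt_or_ge m k with h | h
      · exact lt_of_le_of_lt (hpw m k hml hk h) hlt
      · have : m = k := by omega
        subst this; exact hlt
    have hge' : k + 1 ≤ (l.filter (· < c)).length := by
      calc k + 1 = (l.take (k+1)).length := by rw [List.length_take]; omega
      _ = ((l.take (k+1)).filter (· < c)).length := by rw [← htake]
      _ ≤ (l.filter (· < c)).length :=
        List.Sublist.length_le (List.Sublist.filter _ (List.take_sublist _ _))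
    omega
  · -- c ≤ l[k], and ≠, so c < l[k]; drop k all > c
    have hlt : c < l[k] := lt_of_le_of_ne hge (fun h => hne h.symm)
    have hdrop : (l.drop k).filter (· ≤ c) = [] := by
      rw [List.filter_eq_nil_iff]
      intro a ha
      rcases List.mem_iff_getElem.1 ha with ⟨m, hm, rfl⟩
      have hml : k + m < l.length := by
        have : (l.drop k).length = l.length - k := List.length_drop; omega
      have he : (l.drop k)[m] = l[k+m]'hml := List.getElem_drop
      rw [he]
      simp only [decide_eq_true_eq, not_le]
      rcases Nat.eq_or_lt_of_le (Nat.le_add_right k m) with h | h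
      · have : l[k+m]'hml = l[k] := by congr 1; omega
        rw [this]; exact hlt
      · exact lt_of_lt_of_le hlt (hpw k (k+m) hk hml h)
    have heq : l.filter (· ≤ c) = (l.take k).filter (· ≤ c) ++ (l.drop k).filter (· ≤ c) := by
      rw [← List.filter_append, List.take_append_drop]
    rw [heq, hdrop, List.append_nil] at h2
    have : ((l.take k).filter (· ≤ c)).length ≤ k := by
      calc _ ≤ (l.take k).length := l.take k |>.length_filter_le _
      _ ≤ k := by rw [List.length_take]; omega
    omega

/-- The Rothe diagram of `w` (0-based): squares `(i,j)` with `w i > j` and `w⁻¹ j > i`. -/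
def RD {n : ℕ} (w : Equiv.Perm (Fin n)) : Finset (Fin n × Fin n) :=
  Finset.univ.filter (fun p => p.2 < w p.1 ∧ p.1 < w⁻¹ p.2)

/-- `m_{ij}(w)`: the number of squares of `D(w)` in row `i` weakly left of column `j`. -/
def mStat {n : ℕ} (w : Equiv.Perm (Fin n)) (i j : Fin n) : ℕ :=
  ((RD w).filter (fun p => p.1 = i ∧ p.2 ≤ j)).card

/-- A single-valued Rothe tableau of shape `D(w)` flagged by `(1,…,n)`:
rows weakly decreasing, columns strictly increasing, and each (positive)
entry in 0-based row `i` is at most `i+1`. -/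
def IsSRTf {n : ℕ} (w : Equiv.Perm (Fin n)) (L : Fin n × Fin n → ℕ) : Prop :=
  (∀ i j j' : Fin n, j < j' → (i, j) ∈ RD w → (i, j') ∈ RD w → L (i, j') ≤ L (i, j)) ∧
  (∀ i i' j : Fin n, i < i' → (i, j) ∈ RD w → (i', j) ∈ RD w → L (i, j) < L (i', j)) ∧
  (∀ p ∈ RD w, 1 ≤ L p ∧ L p ≤ (p.1 : ℕ) + 1)

/-- The hook `H_{i,j}(w)`: the squares `(i',j')` of `D(w)` with
`i' = i, j' ≥ j` or `j' = j, i' ≥ i`. -/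
def hookSet {n : ℕ} (w : Equiv.Perm (Fin n)) (i j : Fin n) : Finset (Fin n × Fin n) :=
  (RD w).filter (fun p => (p.1 = i ∧ j ≤ p.2) ∨ (p.2 = j ∧ i ≤ p.1))

/-- The number of squares of the hook strictly to the right of the corner. -/
def armLen {n : ℕ} (w : Equiv.Perm (Fin n)) (i j : Fin n) : ℕ :=
  ((RD w).filter (fun p => p.1 = i ∧ j < p.2)).card

/-- `L` is a balanced labeling of `D(w)`: for each square `(i,j)`, after sorting
the labels of the hook `H_{i,j}(w)` weakly increasingly (read from right to left
along the arm and then top to bottom along the leg, so the corner occupies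
position `armLen w i j` in the sorted list), the label at the corner is
unchanged. -/
def IsBalanced {n : ℕ} (w : Equiv.Perm (Fin n)) (L : Fin n × Fin n → ℕ) : Prop :=
  ∀ i j : Fin n, (i, j) ∈ RD w →
    (Multiset.sort ((hookSet w i j).val.map L) (· ≤ ·)).getD (armLen w i j) 0 = L (i, j)

/-- A column-strict balanced labeling of `D(w)` flagged by `(1,…,n)`. -/
def IsCSBL {n : ℕ} (w : Equiv.Perm (Fin n)) (L : Fin n × Fin n → ℕ) : Prop :=
  IsBalanced w L ∧
  (∀ p ∈ RD w, ∀ q ∈ RD w, p.2 = q.2 → p ≠ q → L p ≠ L q) ∧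
  (∀ p ∈ RD w, 1 ≤ L p ∧ L p ≤ (p.1 : ℕ) + 1)

/-- `w` contains a 1432 pattern. -/
def Contains1432 {n : ℕ} (w : Equiv.Perm (Fin n)) : Prop :=
  ∃ i1 i2 i3 i4 : Fin n, i1 < i2 ∧ i2 < i3 ∧ i3 < i4 ∧
    w i1 < w i4 ∧ w i4 < w i3 ∧ w i3 < w i2
section Aux
variable {n : ℕ} (w : Equiv.Perm (Fin n))

/-- arm of a hook -/
def armF (i j : Fin n) : Finset (Fin n × Fin n) :=
  (RD w).filter (fun p => p.1 = i ∧ j < p.2)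

/-- leg of a hook -/
def legF (i j : Fin n) : Finset (Fin n × Fin n) :=
  (RD w).filter (fun p => p.2 = j ∧ i < p.1)

lemma armLen_eq (i j : Fin n) : armLen w i j = (armF w i j).card := rfl

lemma corner_not_mem_armF (i j : Fin n) : (i, j) ∉ armF w i j := by
  simp [armF]
lemma corner_not_mem_legF (i j : Fin n) : (i, j) ∉ legF w i j := by
  simp [legF]

lemma hook_decomp (i j : Fin n) (hij : (i, j) ∈ RD w) :
    hookSet w i j = insert (i, j) (armF w i j ∪ legF w i j) := by
  ext p
  simp only [hookSet, armF, legF, mem_filter, mem_insert, mem_union]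
  constructor
  · rintro ⟨hp, h | h⟩
    · rcases eq_or_lt_of_le h.2 with he | hlt
      · rcases h with ⟨h1, _⟩
        left
        have : p.2 = j := Fin.ext (by exact_mod_cast congrArg Fin.val he.symm)
        exact Prod.ext h1 this
      · right; left; exact ⟨hp, h.1, hlt⟩
    · rcases eq_or_lt_of_le h.2 with he | hlt
      · left
        have : p.1 = i := Fin.ext (by exact_mod_cast congrArg Fin.val he.symm)
        exact Prod.ext this h.1
      · right; right; exact ⟨hp, h.1, hlt⟩
  · rintro (rfl | ⟨hp, h1, h2⟩ | ⟨hp, h1, h2⟩)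
    · exact ⟨hij, Or.inl ⟨rfl, le_refl _⟩⟩
    · exact ⟨hp, Or.inl ⟨h1, le_of_lt h2⟩⟩
    · exact ⟨hp, Or.inr ⟨h1, le_of_lt h2⟩⟩

lemma arm_leg_disjoint (i j : Fin n) : Disjoint (armF w i j) (legF w i j) := by
  rw [Finset.disjoint_left]
  rintro p hp hq
  simp only [armF, legF, mem_filter] at hp hq
  rcases hp with ⟨-, -, h2⟩
  rcases hq with ⟨-, h3, -⟩
  rw [h3] at h2; exact lt_irrefl _ h2

/-- Master criterion for balancedness at a corner. -/
lemma balanced_at (L : Fin n × Fin n → ℕ) (i j : Fin n) (hij : (i, j) ∈ RD w)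
    (hA : ∀ p ∈ armF w i j, L p ≤ L (i, j))
    (hB : ((armF w i j).filter (fun p => L p < L (i, j))).card
        + ((legF w i j).filter (fun p => L p < L (i, j))).card ≤ armLen w i j) :
    (Multiset.sort ((hookSet w i j).val.map L) (· ≤ ·)).getD (armLen w i j) 0 = L (i, j) := by
  set c := L (i, j) with hc
  set s : Multiset ℕ := (hookSet w i j).val.map L with hs
  have hfilt : ∀ q : ℕ → Prop, ∀ _ : DecidablePred q,
      (s.filter q).card = ((hookSet w i j).filter (fun p => q (L p))).card := by
    intro q hq
    rw [hs, Multiset.filter_map]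
    simp [Finset.card_filter, Multiset.card_map, Finset.filter]
  have hlow : (Multiset.filter (· < c) s).card ≤ armLen w i j := by
    rw [hfilt]
    have hins : (hookSet w i j).filter (fun p => L p < c)
        = (armF w i j).filter (fun p => L p < c) ∪ (legF w i j).filter (fun p => L p < c) := by
      rw [hook_decomp w i j hij, Finset.filter_insert, if_neg (lt_irrefl c), Finset.filter_union]
    rw [hins]
    exact le_trans (Finset.card_union_le _ _) hB
  have hhigh : armLen w i j < (Multiset.filter (· ≤ c) s).card := by
    rw [hfilt]
    have hsub : insert (i, j) (armF w i j) ⊆ (hookSet w i j).filter (fun p => L p ≤ c) := by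
      intro p hp
      rcases Finset.mem_insert.1 hp with rfl | hp
      · refine Finset.mem_filter.2 ⟨?_, le_refl _⟩
        rw [hook_decomp w i j hij]; exact Finset.mem_insert_self _ _
      · refine Finset.mem_filter.2 ⟨?_, hA p hp⟩
        rw [hook_decomp w i j hij]
        exact Finset.mem_insert_of_mem (Finset.mem_union_left _ hp)
    have hcard : armLen w i j + 1 = (insert (i, j) (armF w i j)).card := by
      rw [Finset.card_insert_of_notMem (corner_not_mem_armF w i j), armLen_eq]
    have := Finset.card_le_card hsub
    omega
  have hsort : ((Multiset.sort s (· ≤ ·) : List ℕ) : Multiset ℕ) = s := Multiset.sort_eq _ _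
  have key : ∀ q : ℕ → Prop, ∀ _ : DecidablePred q,
      ((Multiset.sort s (· ≤ ·)).filter (fun a => decide (q a))).length
        = (Multiset.filter q s).card := by
    intro q hq
    have h0 : Multiset.card (Multiset.filter q (↑(Multiset.sort s (· ≤ ·))))
        = ((Multiset.sort s (· ≤ ·)).filter (fun a => decide (q a))).length := by
      rw [Multiset.filter_coe, Multiset.coe_card]
    rw [hsort] at h0
    exact h0.symm
  have hl1 := key (· < c) inferInstance
  have hl2 := key (· ≤ c) inferInstance
  exact sorted_getD_eq _ (Multiset.pairwise_sort _ _) _ _ (by omega) (by omega)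

/-- Wrapper: arm weakly below corner, leg strictly above corner. -/
lemma balanced_at_W1 (L : Fin n × Fin n → ℕ) (i j : Fin n) (hij : (i, j) ∈ RD w)
    (hA : ∀ p ∈ armF w i j, L p ≤ L (i, j))
    (hleg : ∀ p ∈ legF w i j, L (i, j) < L p) :
    (Multiset.sort ((hookSet w i j).val.map L) (· ≤ ·)).getD (armLen w i j) 0 = L (i, j) := by
  refine balanced_at w L i j hij hA ?_
  have h1 : (legF w i j).filter (fun p => L p < L (i, j)) = ∅ := by
    rw [Finset.filter_eq_empty_iff]
    intro p hp
    exact not_lt_of_gt (hleg p hp)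
  rw [h1]
  simp only [Finset.card_empty, Nat.add_zero, armLen_eq]
  exact Finset.card_le_card (Finset.filter_subset _ _)

lemma mem_armF_iff (i j : Fin n) (p : Fin n × Fin n) :
    p ∈ armF w i j ↔ p ∈ RD w ∧ p.1 = i ∧ j < p.2 := Finset.mem_filter

lemma mem_legF_iff (i j : Fin n) (p : Fin n × Fin n) :
    p ∈ legF w i j ↔ p ∈ RD w ∧ p.2 = j ∧ i < p.1 := Finset.mem_filter

/-- Part 1: every flagged single-valued Rothe tableau is a flagged CSBL. -/
lemma srtf_to_csbl (L : Fin n × Fin n → ℕ) (h : IsSRTf w L) : IsCSBL w L := by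
  obtain ⟨hrow, hcol, hflag⟩ := h
  refine ⟨?_, ?_, hflag⟩
  · intro i j hij
    refine balanced_at_W1 w L i j hij ?_ ?_
    · intro p hp
      rw [mem_armF_iff] at hp
      obtain ⟨hpRD, hp1, hp2⟩ := hp
      have hpe : p = (i, p.2) := Prod.ext hp1 rfl
      rw [hpe]
      exact hrow i j p.2 hp2 hij (hpe ▸ hpRD)
    · intro p hp
      rw [mem_legF_iff] at hp
      obtain ⟨hpRD, hp1, hp2⟩ := hp
      have hpe : p = (p.1, j) := Prod.ext rfl hp1
      rw [hpe]
      exact hcol i p.1 j hp2 hij (hpe ▸ hpRD)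
  · intro p hp q hq h2 hne
    have h1 : p.1 ≠ q.1 := by
      intro h1
      exact hne (Prod.ext h1 h2)
    have hpe : p = (p.1, p.2) := rfl
    have hqe : q = (q.1, p.2) := Prod.ext rfl h2.symm
    rcases lt_or_gt_of_ne h1 with hlt | hgt
    · have := hcol p.1 q.1 p.2 hlt (hpe ▸ hp) (hqe ▸ hq)
      rw [← hpe, ← hqe] at this
      exact ne_of_lt this
    · have := hcol q.1 p.1 p.2 hgt (hqe ▸ hq) (hpe ▸ hp)
      rw [← hpe, ← hqe] at this
      exact ne_of_gt this


/-- rows of column `j` with a diagram square strictly right of `j` -/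
def armedB (j : Fin n) : Finset (Fin n) :=
  Finset.univ.filter (fun i => (i, j) ∈ RD w ∧ ∃ j' : Fin n, j < j' ∧ (i, j') ∈ RD w)

/-- rows of column `j` with no diagram square strictly right of `j` -/
def armlessB (j : Fin n) : Finset (Fin n) :=
  Finset.univ.filter (fun i => (i, j) ∈ RD w ∧ ¬ ∃ j' : Fin n, j < j' ∧ (i, j') ∈ RD w)

/-- allowed label values: positive, not of the form `i+1` for an armed row `i` -/
def prA (j : Fin n) : ℕ → Prop :=
  fun v => 0 < v ∧ ∀ i ∈ armedB w j, (i : ℕ) + 1 ≠ v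

instance (j : Fin n) : DecidablePred (prA w j) := by
  unfold prA; infer_instance

/-- rank of an armless row -/
def rankOf (j : Fin n) (i : Fin n) : ℕ := ((armlessB w j).filter (fun f => f < i)).card

/-- new label of an armless row -/
noncomputable def lab (j : Fin n) (i : Fin n) : ℕ := Nat.nth (prA w j) (rankOf w j i)

lemma prA_infinite (j : Fin n) : (setOf (prA w j)).Infinite := by
  refine Set.infinite_of_injective_forall_mem (f := fun k : ℕ => k + n + 1) ?_ ?_
  · intro a b hab
    simpa using hab
  · intro k
    show 0 < k + n + 1 ∧ ∀ i ∈ armedB w j, (i : ℕ) + 1 ≠ k + n + 1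
    refine ⟨by omega, ?_⟩
    intro i _ h
    have := i.isLt
    omega

lemma lab_prA (j i : Fin n) : prA w j (lab w j i) :=
  Nat.nth_mem_of_infinite (prA_infinite w j) _

lemma lab_pos (j i : Fin n) : 1 ≤ lab w j i := (lab_prA w j i).1

lemma armless_not_armed (j i : Fin n) (h : i ∈ armlessB w j) : i ∉ armedB w j := by
  intro ha
  simp only [armlessB, Finset.mem_filter, Finset.mem_univ, true_and] at h
  simp only [armedB, Finset.mem_filter, Finset.mem_univ, true_and] at ha
  exact h.2 ha.2

lemma armless_mem_RD (j i : Fin n) (h : i ∈ armlessB w j) : (i, j) ∈ RD w := by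
  simp only [armlessB, Finset.mem_filter] at h
  exact h.2.1

lemma armed_mem_RD (j i : Fin n) (h : i ∈ armedB w j) : (i, j) ∈ RD w := by
  simp only [armedB, Finset.mem_filter] at h
  exact h.2.1

lemma rank_lt_rank (j : Fin n) {i i' : Fin n} (hi : i ∈ armlessB w j) (h : i < i') :
    rankOf w j i < rankOf w j i' := by
  apply Finset.card_lt_card
  rw [Finset.ssubset_iff_of_subset]
  · exact ⟨i, Finset.mem_filter.2 ⟨hi, h⟩, fun hmem => absurd (Finset.mem_filter.1 hmem).2 (lt_irrefl i)⟩
  · intro f hf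
    rw [Finset.mem_filter] at hf ⊢
    exact ⟨hf.1, lt_trans hf.2 h⟩

lemma lab_lt_lab (j : Fin n) {i i' : Fin n} (hi : i ∈ armlessB w j) (h : i < i') :
    lab w j i < lab w j i' :=
  Nat.nth_strictMono (prA_infinite w j) (rank_lt_rank w j hi h)

lemma lab_le (j : Fin n) (f : Fin n) (hf : f ∈ armlessB w j) : lab w j f ≤ (f : ℕ) + 1 := by
  have hcnt : rankOf w j f < Nat.count (prA w j) ((f : ℕ) + 2) := by
    rw [Nat.count_eq_card_filter_range]
    have hfil : (armlessB w j).filter (fun g => g ≤ f)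
        = insert f ((armlessB w j).filter (fun g => g < f)) := by
      ext g
      simp only [Finset.mem_filter, Finset.mem_insert]
      constructor
      · rintro ⟨hg, hle⟩
        rcases eq_or_lt_of_le hle with he | hlt
        · exact Or.inl he
        · exact Or.inr ⟨hg, hlt⟩
      · rintro (rfl | ⟨hg, hlt⟩)
        · exact ⟨hf, le_refl _⟩
        · exact ⟨hg, le_of_lt hlt⟩
    have hnotmem : f ∉ (armlessB w j).filter (fun g => g < f) := by
      simp
    have hcardle : ((armlessB w j).filter (fun g => g ≤ f)).card
        ≤ ((Finset.range ((f : ℕ) + 2)).filter (prA w j)).card := by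
      refine Finset.card_le_card_of_injOn (fun i => (i : ℕ) + 1) ?_ ?_
      · intro g hg
        rw [Finset.mem_coe, Finset.mem_filter] at hg
        obtain ⟨hg1, hg2⟩ := hg
        have hgf : (g : ℕ) ≤ (f : ℕ) := hg2
        rw [Finset.mem_coe, Finset.mem_filter, Finset.mem_range]
        dsimp only
        refine ⟨by omega, by omega, ?_⟩
        intro i hi he
        have : i = g := Fin.ext (by omega)
        subst this
        exact armless_not_armed w j i hg1 hi
      · intro a _ b _ hab
        dsimp only at hab
        exact Fin.ext (by omega)
    rw [hfil, Finset.card_insert_of_notMem hnotmem] at hcardle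
    calc rankOf w j f < rankOf w j f + 1 := Nat.lt_succ_self _
    _ ≤ _ := hcardle
  have := Nat.nth_lt_of_lt_count hcnt
  unfold lab
  omega

/-- rows eligible as witnesses of a violation -/
noncomputable def violSet (j : Fin n) : Finset (Fin n) :=
  (armlessB w j).filter (fun f => ∃ i ∈ armedB w j, i < f ∧ lab w j f ≤ (i : ℕ))


lemma mem_armedB_of_not_armless (j i : Fin n) (hRD : (i, j) ∈ RD w)
    (h : i ∉ armlessB w j) : i ∈ armedB w j := by
  simp only [armlessB, Finset.mem_filter, Finset.mem_univ, true_and, not_and, not_not] at h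
  exact Finset.mem_filter.2 ⟨Finset.mem_univ _, hRD, h hRD⟩

/-- The construction: given a column with a violation witness, build a
non-Rothe flagged CSBL. -/
lemma construction (j : Fin n) (hV : (violSet w j).Nonempty) :
    ∃ L : Fin n × Fin n → ℕ, IsCSBL w L ∧ ¬ IsSRTf w L := by
  classical
  set fs := (violSet w j).min' hV with hfs_def
  have hfsV : fs ∈ violSet w j := Finset.min'_mem _ _
  rw [violSet, Finset.mem_filter] at hfsV
  obtain ⟨hfs_armless, istar, histar, hlt_istar, hlab_istar⟩ := hfsV
  set L : Fin n × Fin n → ℕ :=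
    fun p => if p.2 = j ∧ p.1 ∈ armlessB w j ∧ p.1 ≤ fs then lab w j p.1 else (p.1 : ℕ) + 1
    with hL
  have hLrel : ∀ p : Fin n × Fin n, p.2 = j → p.1 ∈ armlessB w j → p.1 ≤ fs →
      L p = lab w j p.1 := by
    intro p h1 h2 h3
    rw [hL]; exact if_pos ⟨h1, h2, h3⟩
  have hLcan : ∀ p : Fin n × Fin n, ¬(p.2 = j ∧ p.1 ∈ armlessB w j ∧ p.1 ≤ fs) →
      L p = (p.1 : ℕ) + 1 := by
    intro p h
    rw [hL]; exact if_neg h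
  have hmin : ∀ f ∈ armlessB w j, ∀ i ∈ armedB w j, i < f → lab w j f ≤ (i : ℕ) → fs ≤ f := by
    intro f hf i hi h1 h2
    exact Finset.min'_le _ _ (Finset.mem_filter.2 ⟨hf, ⟨i, hi, h1, h2⟩⟩)
  refine ⟨L, ⟨?_, ?_, ?_⟩, ?_⟩
  · -- balanced
    intro i j2 hij
    by_cases hj2 : j2 = j
    · subst hj2
      by_cases harm : ∃ j' : Fin n, j2 < j' ∧ (i, j') ∈ RD w
      · -- armed row
        have hiB : i ∈ armedB w j2 := Finset.mem_filter.2 ⟨Finset.mem_univ _, hij, harm⟩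
        have hcorner : L (i, j2) = (i : ℕ) + 1 := by
          apply hLcan
          rintro ⟨-, h2, -⟩
          exact armless_not_armed w j2 i h2 hiB
        have harmcan : ∀ p ∈ armF w i j2, L p = (i : ℕ) + 1 := by
          intro p hp
          rw [mem_armF_iff] at hp
          obtain ⟨hpRD, hp1, hp2⟩ := hp
          have : L p = (p.1 : ℕ) + 1 := by
            apply hLcan
            rintro ⟨h1, -, -⟩
            rw [h1] at hp2
            exact lt_irrefl _ hp2
          rw [this, hp1]
        apply balanced_at w L i j2 hij
        · intro p hp
          rw [harmcan p hp, hcorner]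
        · have hemp : (armF w i j2).filter (fun p => L p < L (i, j2)) = ∅ := by
            rw [Finset.filter_eq_empty_iff]
            intro p hp
            rw [harmcan p hp, hcorner]
            exact lt_irrefl _
          have hsub : (legF w i j2).filter (fun p => L p < L (i, j2)) ⊆ {(fs, j2)} := by
            intro p hp
            rw [Finset.mem_filter] at hp
            obtain ⟨hpleg, hplt⟩ := hp
            rw [mem_legF_iff] at hpleg
            obtain ⟨hpRD, hp2eq, hp1gt⟩ := hpleg
            rw [hcorner] at hplt
            by_cases hrel : p.2 = j2 ∧ p.1 ∈ armlessB w j2 ∧ p.1 ≤ fs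
            · obtain ⟨heq2, hp_arm, hp_le⟩ := hrel
              rw [hLrel p hp2eq hp_arm hp_le] at hplt
              have hle : lab w j2 p.1 ≤ (i : ℕ) := by omega
              have h1 : fs ≤ p.1 := hmin p.1 hp_arm i hiB hp1gt hle
              have h2 : p.1 = fs := le_antisymm hp_le h1
              rw [Finset.mem_singleton]
              exact Prod.ext h2 hp2eq
            · rw [hLcan p hrel] at hplt
              have := Fin.lt_def.1 hp1gt
              omega
          have h1 : ((legF w i j2).filter (fun p => L p < L (i, j2))).card ≤ 1 := by
            calc _ ≤ ({(fs, j2)} : Finset (Fin n × Fin n)).card := Finset.card_le_card hsub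
            _ = 1 := Finset.card_singleton _
          have h2 : 1 ≤ armLen w i j2 := by
            rw [armLen_eq]
            apply Finset.card_pos.2
            obtain ⟨j', hj', hRD⟩ := harm
            exact ⟨(i, j'), (mem_armF_iff w i j2 (i, j')).2 ⟨hRD, rfl, hj'⟩⟩
          rw [hemp]
          simp only [Finset.card_empty, Nat.zero_add]
          omega
      · -- armless row
        have hiA : i ∈ armlessB w j2 := Finset.mem_filter.2 ⟨Finset.mem_univ _, hij, harm⟩
        apply balanced_at_W1 w L i j2 hij
        · intro p hp
          rw [mem_armF_iff] at hp
          obtain ⟨hpRD, hp1, hp2⟩ := hp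
          exfalso
          apply harm
          refine ⟨p.2, hp2, ?_⟩
          have : p = (i, p.2) := Prod.ext hp1 rfl
          rwa [this] at hpRD
        · intro p hp
          rw [mem_legF_iff] at hp
          obtain ⟨hpRD, hp2eq, hp1gt⟩ := hp
          by_cases hile : i ≤ fs
          · rw [hLrel (i, j2) rfl hiA hile]
            dsimp only
            by_cases hrel : p.2 = j2 ∧ p.1 ∈ armlessB w j2 ∧ p.1 ≤ fs
            · rw [hLrel p hrel.1 hrel.2.1 hrel.2.2]
              exact lab_lt_lab w j2 hiA hp1gt
            · rw [hLcan p hrel]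
              have h1 := lab_le w j2 i hiA
              have h2 := Fin.lt_def.1 hp1gt
              omega
          · rw [hLcan (i, j2) (by rintro ⟨-, -, h⟩; exact hile h)]
            dsimp only
            have hple : ¬ p.1 ≤ fs := by
              intro hple
              apply hile
              exact le_of_lt (lt_of_lt_of_le hp1gt hple)
            rw [hLcan p (by rintro ⟨-, -, h⟩; exact hple h)]
            have := Fin.lt_def.1 hp1gt
            omega
    · -- column ≠ j
      have hcorner : L (i, j2) = (i : ℕ) + 1 := by
        apply hLcan
        rintro ⟨h1, -, -⟩
        exact hj2 h1
      apply balanced_at_W1 w L i j2 hij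
      · intro p hp
        rw [mem_armF_iff] at hp
        obtain ⟨hpRD, hp1, hp2⟩ := hp
        rw [hcorner]
        by_cases hrel : p.2 = j ∧ p.1 ∈ armlessB w j ∧ p.1 ≤ fs
        · rw [hLrel p hrel.1 hrel.2.1 hrel.2.2, hp1]
          have := lab_le w j p.1 hrel.2.1
          rw [hp1] at this
          exact this
        · rw [hLcan p hrel, hp1]
      · intro p hp
        rw [mem_legF_iff] at hp
        obtain ⟨hpRD, hp2eq, hp1gt⟩ := hp
        rw [hcorner, hLcan p (by rintro ⟨h1, -, -⟩; rw [hp2eq] at h1; exact hj2 h1)]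
        have := Fin.lt_def.1 hp1gt
        omega
  · -- column strict
    have key : ∀ p q : Fin n × Fin n, p ∈ RD w → q ∈ RD w → p.2 = q.2 → p.1 < q.1 →
        L p ≠ L q := by
      intro p q hp hq h2 hpq
      by_cases hq_rel : q.2 = j ∧ q.1 ∈ armlessB w j ∧ q.1 ≤ fs
      · rw [hLrel q hq_rel.1 hq_rel.2.1 hq_rel.2.2]
        by_cases hp_rel : p.2 = j ∧ p.1 ∈ armlessB w j ∧ p.1 ≤ fs
        · rw [hLrel p hp_rel.1 hp_rel.2.1 hp_rel.2.2]
          exact ne_of_lt (lab_lt_lab w j hp_rel.2.1 hpq)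
        · rw [hLcan p hp_rel]
          have hp2j : p.2 = j := by rw [h2]; exact hq_rel.1
          have hple : p.1 ≤ fs := le_of_lt (lt_of_lt_of_le hpq hq_rel.2.2)
          have hp_not_armless : p.1 ∉ armlessB w j := by
            intro h
            exact hp_rel ⟨hp2j, h, hple⟩
          have hpRD : (p.1, j) ∈ RD w := by
            have : p = (p.1, j) := Prod.ext rfl hp2j
            rwa [this] at hp
          have hp_armed : p.1 ∈ armedB w j := mem_armedB_of_not_armless w j p.1 hpRD hp_not_armless
          intro h
          exact (lab_prA w j q.1).2 p.1 hp_armed h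
      · rw [hLcan q hq_rel]
        by_cases hp_rel : p.2 = j ∧ p.1 ∈ armlessB w j ∧ p.1 ≤ fs
        · rw [hLrel p hp_rel.1 hp_rel.2.1 hp_rel.2.2]
          have h1 := lab_le w j p.1 hp_rel.2.1
          have h2 := Fin.lt_def.1 hpq
          omega
        · rw [hLcan p hp_rel]
          have := Fin.lt_def.1 hpq
          omega
    intro p hp q hq h2 hne
    have h1 : p.1 ≠ q.1 := fun h1 => hne (Prod.ext h1 h2)
    rcases lt_or_gt_of_ne h1 with hlt | hgt
    · exact key p q hp hq h2 hlt
    · exact (key q p hq hp h2.symm hgt).symm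
  · -- flag
    intro p hp
    by_cases hrel : p.2 = j ∧ p.1 ∈ armlessB w j ∧ p.1 ≤ fs
    · rw [hLrel p hrel.1 hrel.2.1 hrel.2.2]
      exact ⟨lab_pos w j p.1, lab_le w j p.1 hrel.2.1⟩
    · rw [hLcan p hrel]
      omega
  · -- not SRT
    intro hS
    have hRDi : (istar, j) ∈ RD w := armed_mem_RD w j istar histar
    have hRDf : (fs, j) ∈ RD w := armless_mem_RD w j fs hfs_armless
    have h1 := hS.2.1 istar fs j hlt_istar hRDi hRDf
    have h2 : L (istar, j) = (istar : ℕ) + 1 := by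
      apply hLcan
      rintro ⟨-, h2, -⟩
      exact armless_not_armed w j istar h2 histar
    have h3 : L (fs, j) = lab w j fs := hLrel (fs, j) rfl hfs_armless (le_refl _)
    rw [h2, h3] at h1
    omega


lemma mem_RD_iff (p : Fin n × Fin n) : p ∈ RD w ↔ p.2 < w p.1 ∧ p.1 < w⁻¹ p.2 := by
  simp [RD]

/-- From a 1432 pattern, some column admits a violation witness. -/
lemma viol_exists (hw : Contains1432 w) : ∃ j : Fin n, (violSet w j).Nonempty := by
  classical
  set P : ℕ → Prop := fun g => ∃ i1 i2 i3 i4 : Fin n,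
    (i1 < i2 ∧ i2 < i3 ∧ i3 < i4 ∧ w i1 < w i4 ∧ w i4 < w i3 ∧ w i3 < w i2) ∧
    ((w i3 : ℕ) - (w i4 : ℕ) = g) with hPdef
  have hP : ∃ g, P g := by
    obtain ⟨i1, i2, i3, i4, h1, h2, h3, h4, h5, h6⟩ := hw
    exact ⟨_, i1, i2, i3, i4, ⟨h1, h2, h3, h4, h5, h6⟩, rfl⟩
  obtain ⟨i1, i2, i3, i4, ⟨h12, h23, h34, h14, h43, h32⟩, hg⟩ := Nat.find_spec hP
  have hno : ∀ a b c d : Fin n, a < b → b < c → c < d → w a < w d → w d < w c →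
      w c < w b → ((w c : ℕ) - (w d : ℕ)) < Nat.find hP → False := by
    intro a b c d q1 q2 q3 q4 q5 q6 qlt
    exact Nat.find_min hP qlt ⟨a, b, c, d, ⟨q1, q2, q3, q4, q5, q6⟩, rfl⟩
  set j : Fin n := w i4 with hjdef
  have hRD_i3 : (i3, j) ∈ RD w := by
    rw [mem_RD_iff]
    refine ⟨h43, ?_⟩
    show i3 < w⁻¹ (w i4)
    rw [show ∀ x, w⁻¹ (w x) = x from w.symm_apply_apply]
    exact h34
  have harmless_i3 : ¬ ∃ j' : Fin n, j < j' ∧ (i3, j') ∈ RD w := by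
    rintro ⟨j', hjj', hRD⟩
    rw [mem_RD_iff] at hRD
    obtain ⟨hRD1, hRD2⟩ := hRD
    have hwi5 : w (w⁻¹ j') = j' := w.apply_symm_apply j'
    refine hno i1 i2 i3 (w⁻¹ j') h12 h23 hRD2 ?_ ?_ h32 ?_
    · rw [hwi5]; exact lt_trans h14 hjj'
    · rw [hwi5]; exact hRD1
    · rw [hwi5]
      have e1 : (w i4 : ℕ) < (j' : ℕ) := Fin.lt_def.1 hjj'
      have e2 : (j' : ℕ) < (w i3 : ℕ) := Fin.lt_def.1 hRD1
      omega
  have hi3A : i3 ∈ armlessB w j :=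
    Finset.mem_filter.2 ⟨Finset.mem_univ _, hRD_i3, harmless_i3⟩
  have hRD_i2 : (i2, j) ∈ RD w := by
    rw [mem_RD_iff]
    refine ⟨lt_trans h43 h32, ?_⟩
    show i2 < w⁻¹ (w i4)
    rw [show ∀ x, w⁻¹ (w x) = x from w.symm_apply_apply]
    exact lt_trans h23 h34
  have hRD_i2' : (i2, w i3) ∈ RD w := by
    rw [mem_RD_iff]
    refine ⟨h32, ?_⟩
    show i2 < w⁻¹ (w i3)
    rw [show ∀ x, w⁻¹ (w x) = x from w.symm_apply_apply]
    exact h23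
  have hi2B : i2 ∈ armedB w j :=
    Finset.mem_filter.2 ⟨Finset.mem_univ _, hRD_i2, ⟨w i3, h43, hRD_i2'⟩⟩
  -- Step A: armless rows below i3 are all below i2
  have hrank : rankOf w j i3 = ((armlessB w j).filter (fun f => f < i2)).card := by
    unfold rankOf
    congr 1
    ext f
    simp only [Finset.mem_filter]
    constructor
    · rintro ⟨hf, hflt⟩
      refine ⟨hf, ?_⟩
      by_contra hnot
      push_neg at hnot
      have hne : f ≠ i2 := by
        intro he
        exact armless_not_armed w j f hf (he ▸ hi2B)
      have h2f : i2 < f := lt_of_le_of_ne hnot (Ne.symm hne)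
      have hfRD : (f, j) ∈ RD w := armless_mem_RD w j f hf
      have hjwf : j < w f := ((mem_RD_iff w (f, j)).1 hfRD).1
      have hwf3 : w f < w i3 := by
        rcases lt_trichotomy (w f) (w i3) with h | h | h
        · exact h
        · exfalso; exact (ne_of_lt hflt) (w.injective h)
        · exfalso
          apply (Finset.mem_filter.1 hf).2.2
          refine ⟨w i3, h43, ?_⟩
          rw [mem_RD_iff]
          refine ⟨h, ?_⟩
          show f < w⁻¹ (w i3)
          rw [show ∀ x, w⁻¹ (w x) = x from w.symm_apply_apply]
          exact hflt
      refine hno i1 i2 f i4 h12 h2f (lt_trans hflt h34) h14 hjwf (lt_trans hwf3 h32) ?_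
      have e1 : (w i4 : ℕ) < (w f : ℕ) := Fin.lt_def.1 hjwf
      have e2 : (w f : ℕ) < (w i3 : ℕ) := Fin.lt_def.1 hwf3
      omega
    · rintro ⟨hf, hflt⟩
      exact ⟨hf, lt_trans hflt h23⟩
  -- Step B: the label of i3 is at most i2
  have hi1_nRD : (i1, j) ∉ RD w := by
    rw [mem_RD_iff]
    rintro ⟨h1, -⟩
    exact absurd (lt_trans h1 h14) (lt_irrefl _)
  have hi1_narmless : i1 ∉ armlessB w j := by
    intro h
    exact hi1_nRD (armless_mem_RD w j i1 h)
  have hi1_narmed : i1 ∉ armedB w j := by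
    intro h
    exact hi1_nRD (armed_mem_RD w j i1 h)
  have hcnt : rankOf w j i3 < Nat.count (prA w j) ((i2 : ℕ) + 1) := by
    rw [Nat.count_eq_card_filter_range, hrank]
    have hT1 : i1 ∉ (armlessB w j).filter (fun f => f < i2) := by
      intro h
      exact hi1_narmless (Finset.mem_filter.1 h).1
    have hcard : (insert i1 ((armlessB w j).filter (fun f => f < i2))).card
        = ((armlessB w j).filter (fun f => f < i2)).card + 1 :=
      Finset.card_insert_of_notMem hT1
    have hle : (insert i1 ((armlessB w j).filter (fun f => f < i2))).card
        ≤ ((Finset.range ((i2 : ℕ) + 1)).filter (prA w j)).card := by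
      refine Finset.card_le_card_of_injOn (fun i => (i : ℕ) + 1) ?_ ?_
      · intro g hg
        have hglt : g < i2 ∧ g ∉ armedB w j := by
          rcases Finset.mem_insert.1 hg with rfl | hg'
          · exact ⟨h12, hi1_narmed⟩
          · have := Finset.mem_filter.1 hg'
            exact ⟨this.2, armless_not_armed w j g this.1⟩
        have hgval : (g : ℕ) < (i2 : ℕ) := Fin.lt_def.1 hglt.1
        rw [Finset.mem_coe, Finset.mem_filter, Finset.mem_range]
        dsimp only
        refine ⟨by omega, by omega, ?_⟩
        intro i' hi' he
        have : i' = g := Fin.ext (by omega)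
        subst this
        exact hglt.2 hi'
      · intro a _ b _ hab
        dsimp only at hab
        exact Fin.ext (by omega)
    have hx : ((Finset.range ((i2 : ℕ) + 1)).filter (fun x => prA w j x)).card
        = ((Finset.range ((i2 : ℕ) + 1)).filter (prA w j)).card := rfl
    omega
  have hlab : lab w j i3 ≤ (i2 : ℕ) := by
    have := Nat.nth_lt_of_lt_count hcnt
    unfold lab
    omega
  exact ⟨j, ⟨i3, Finset.mem_filter.2 ⟨hi3A, ⟨i2, hi2B, h23, hlab⟩⟩⟩⟩

end Aux

/-- If `w` contains a 1432 pattern, then every flagged single-valued Rothe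
tableau is a flagged column-strict balanced labeling, but some flagged
column-strict balanced labeling of `D(w)` is not a flagged Rothe tableau;
i.e. `SRT(w, f₀) ⊊ CSBL(w, f₀)`. -/
theorem stmt18 {n : ℕ} (w : Equiv.Perm (Fin n)) (hw : Contains1432 w) :
    (∀ L : Fin n × Fin n → ℕ, IsSRTf w L → IsCSBL w L) ∧
    (∃ L : Fin n × Fin n → ℕ, IsCSBL w L ∧ ¬ IsSRTf w L) := by
  refine ⟨fun L h => srtf_to_csbl w L h, ?_⟩
  obtain ⟨j, hV⟩ := viol_exists w hw
  exact construction w j hV
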